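/- Let 𝒢 be a family of triples (a,b,c) of functions on the unit disk, each meromorphic or identically ∞, and ε > 0 with σ(a(z),b(z))·σ(a(z),c(z))·σ(b(z),c(z)) ≥ ε for all (a,b,c) ∈ 𝒢 and all z ∈ 𝔻. Then each of the coordinate families {a : (a,b,c) ∈ 𝒢}, {b : (a,b,c) ∈ 𝒢}, {c : (a,b,c) ∈ 𝒢} is normal in 𝔻. -/

import Mathlib

open Complex OnePoint Filter Topology Metric

/-- Chordal metric on the Riemann sphere of diameter 2. -/
noncomputable def chordal : OnePoint ℂ → OnePoint ℂ → ℝ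
  | (z : ℂ), (w : ℂ) => 2 * ‖z - w‖ /
      (Real.sqrt (1 + ‖z‖ ^ 2) * Real.sqrt (1 + ‖w‖ ^ 2))
  | (z : ℂ), ∞ => 2 / Real.sqrt (1 + ‖z‖ ^ 2)
  | ∞, (w : ℂ) => 2 / Real.sqrt (1 + ‖w‖ ^ 2)
  | ∞, ∞ => 0

/-- Spherical (great-circle) metric on the Riemann sphere of diameter 2. -/
noncomputable def sphDist (x y : OnePoint ℂ) : ℝ := 2 * Real.arcsin (chordal x y / 2)

/-- Value of the quotient `p/q` on the Riemann sphere. -/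
noncomputable def toSph (p q : ℂ) : OnePoint ℂ :=
  if q = 0 then ∞ else ((p / q : ℂ) : OnePoint ℂ)

/-- A sphere-valued function is meromorphic on `U` (possibly `≡ ∞`) iff it is a quotient
of two holomorphic functions without common zeros. -/
def MeromorphicOnSph (U : Set ℂ) (a : ℂ → OnePoint ℂ) : Prop :=
  ∃ f g : ℂ → ℂ, DifferentiableOn ℂ f U ∧ DifferentiableOn ℂ g U ∧
    (∀ z ∈ U, ¬(f z = 0 ∧ g z = 0)) ∧ ∀ z ∈ U, a z = toSph (f z) (g z)

/-! ### Basic facts -/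

lemma chordal_inf_coe (w : ℂ) : chordal ∞ (w : OnePoint ℂ) = 2 / Real.sqrt (1 + ‖w‖ ^ 2) := rfl
lemma chordal_coe_inf (z : ℂ) : chordal (z : OnePoint ℂ) ∞ = 2 / Real.sqrt (1 + ‖z‖ ^ 2) := rfl
lemma chordal_coe_coe (z w : ℂ) : chordal (z : OnePoint ℂ) (w : OnePoint ℂ) =
    2 * ‖z - w‖ / (Real.sqrt (1 + ‖z‖ ^ 2) * Real.sqrt (1 + ‖w‖ ^ 2)) := rfl
lemma chordal_inf_inf : chordal ∞ ∞ = 0 := rfl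

lemma one_add_sq_pos (z : ℂ) : (0:ℝ) < 1 + ‖z‖ ^ 2 := by positivity

lemma chordal_nonneg (x y : OnePoint ℂ) : 0 ≤ chordal x y := by
  induction x using OnePoint.rec <;> induction y using OnePoint.rec <;>
    simp only [chordal_inf_inf, chordal_inf_coe, chordal_coe_inf, chordal_coe_coe] <;> positivity

lemma chordal_comm (x y : OnePoint ℂ) : chordal x y = chordal y x := by
  induction x using OnePoint.rec <;> induction y using OnePoint.rec <;>
    simp only [chordal_inf_inf, chordal_inf_coe, chordal_coe_inf, chordal_coe_coe]
  rw [norm_sub_rev]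
  ring

lemma sqrt_one_add_sq_ge_one (z : ℂ) : 1 ≤ Real.sqrt (1 + ‖z‖ ^ 2) := by
  have h := Real.sqrt_le_sqrt
    (le_add_of_nonneg_right (sq_nonneg (‖z‖)) : (1:ℝ) ≤ 1 + ‖z‖ ^ 2)
  simpa using h

lemma chordal_le_two (x y : OnePoint ℂ) : chordal x y ≤ 2 := by
  induction x using OnePoint.rec <;> induction y using OnePoint.rec <;>
    simp only [chordal_inf_inf, chordal_inf_coe, chordal_coe_inf, chordal_coe_coe]
  · norm_num
  · rw [div_le_iff₀ (by positivity)]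
    nlinarith [sqrt_one_add_sq_ge_one ‹ℂ›]
  · rw [div_le_iff₀ (by positivity)]
    nlinarith [sqrt_one_add_sq_ge_one ‹ℂ›]
  · rename_i z w
    rw [div_le_iff₀ (by positivity)]
    have h1 : ‖z - w‖ ≤ ‖z‖ + ‖w‖ := by
      have := norm_add_le z (-w)
      simpa [sub_eq_add_neg] using this
    have h2 : ‖z‖ + ‖w‖ ≤
        Real.sqrt (1 + ‖z‖ ^ 2) * Real.sqrt (1 + ‖w‖ ^ 2) := by
      rw [← Real.sqrt_mul (by positivity)]
      have hs : (‖z‖ + ‖w‖) ^ 2 ≤ (1 + ‖z‖ ^ 2) * (1 + ‖w‖ ^ 2) := by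
        nlinarith [sq_nonneg (‖z‖ * ‖w‖ - 1), sq_nonneg (‖z‖ - ‖w‖)]
      calc ‖z‖ + ‖w‖
          = Real.sqrt ((‖z‖ + ‖w‖) ^ 2) := (Real.sqrt_sq (by positivity)).symm
        _ ≤ _ := Real.sqrt_le_sqrt hs
    nlinarith

lemma sphDist_comm (x y : OnePoint ℂ) : sphDist x y = sphDist y x := by
  rw [sphDist, sphDist, chordal_comm]

lemma sphDist_nonneg (x y : OnePoint ℂ) : 0 ≤ sphDist x y := by
  have := chordal_nonneg x y
  rw [sphDist]
  have : 0 ≤ Real.arcsin (chordal x y / 2) := Real.arcsin_nonneg.2 (by linarith)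
  linarith

lemma sphDist_le_pi (x y : OnePoint ℂ) : sphDist x y ≤ Real.pi := by
  rw [sphDist]
  have := Real.arcsin_le_pi_div_two (chordal x y / 2)
  linarith

lemma sphDist_le_chordal_mul (x y : OnePoint ℂ) : sphDist x y ≤ Real.pi / 2 * chordal x y := by
  have h0 := chordal_nonneg x y
  have h2 := chordal_le_two x y
  have harc : Real.arcsin (chordal x y / 2) ≤ Real.pi / 2 * (chordal x y / 2) := by
    have hJ := Real.mul_le_sin (Real.arcsin_nonneg.2 (by linarith))
      (Real.arcsin_le_pi_div_two (chordal x y / 2))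
    rw [Real.sin_arcsin (by linarith) (by linarith)] at hJ
    have hπ := Real.pi_pos
    rw [div_mul_eq_mul_div, div_le_iff₀ hπ] at hJ
    linarith [hJ]
  rw [sphDist]; linarith

lemma chordal_le_sphDist (x y : OnePoint ℂ) : chordal x y ≤ sphDist x y := by
  have h0 := chordal_nonneg x y
  have h2 := chordal_le_two x y
  have : chordal x y / 2 ≤ Real.arcsin (chordal x y / 2) := by
    nth_rewrite 1 [← Real.sin_arcsin (x := chordal x y / 2) (by linarith) (by linarith)]
    exact Real.sin_le (Real.arcsin_nonneg.2 (by linarith))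
  rw [sphDist]; linarith

/-- The chordal distance in homogeneous coordinates. -/
lemma chordal_toSph (p q p' q' : ℂ) (h : ¬(p = 0 ∧ q = 0)) (h' : ¬(p' = 0 ∧ q' = 0)) :
    chordal (toSph p q) (toSph p' q') = 2 * ‖p * q' - p' * q‖ /
      (Real.sqrt (‖p‖ ^ 2 + ‖q‖ ^ 2) *
        Real.sqrt (‖p'‖ ^ 2 + ‖q'‖ ^ 2)) := by
  have key : ∀ u v : ℂ, v ≠ 0 →
      Real.sqrt (1 + ‖u / v‖ ^ 2) =
        Real.sqrt (‖u‖ ^ 2 + ‖v‖ ^ 2) / ‖v‖ := by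
    intro u v hv
    have hva : (0:ℝ) < ‖v‖ := norm_pos_iff.2 hv
    rw [show 1 + ‖u / v‖ ^ 2 =
        (‖u‖ ^ 2 + ‖v‖ ^ 2) / ‖v‖ ^ 2 by
      rw [norm_div]; field_simp; ring]
    rw [Real.sqrt_div (by positivity), Real.sqrt_sq hva.le]
  rcases eq_or_ne q 0 with hq | hq <;> rcases eq_or_ne q' 0 with hq' | hq'
  · simp only [toSph, if_pos hq, if_pos hq', chordal_inf_inf, hq, hq', mul_zero, sub_zero,
      norm_zero]
    simp [chordal_inf_inf]
  · have hp : p ≠ 0 := fun hp => h ⟨hp, hq⟩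
    have hpa : (0:ℝ) < ‖p‖ := norm_pos_iff.2 hp
    have hq'a : (0:ℝ) < ‖q'‖ := norm_pos_iff.2 hq'
    have hN' : (0:ℝ) < Real.sqrt (‖p'‖ ^ 2 + ‖q'‖ ^ 2) := by
      apply Real.sqrt_pos.2; positivity
    simp only [toSph, if_pos hq, if_neg hq', chordal_inf_coe]
    rw [key p' q' hq', hq]
    simp only [mul_zero, sub_zero, norm_mul, norm_zero]
    rw [show (0:ℝ) ^ 2 = 0 by norm_num, add_zero, Real.sqrt_sq hpa.le]
    field_simp
    try ring
  · have hp' : p' ≠ 0 := fun hp => h' ⟨hp, hq'⟩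
    have hpa : (0:ℝ) < ‖p'‖ := norm_pos_iff.2 hp'
    have hqa : (0:ℝ) < ‖q‖ := norm_pos_iff.2 hq
    have hN : (0:ℝ) < Real.sqrt (‖p‖ ^ 2 + ‖q‖ ^ 2) := by
      apply Real.sqrt_pos.2; positivity
    simp only [toSph, if_neg hq, if_pos hq', chordal_coe_inf]
    rw [key p q hq, hq']
    simp only [mul_zero, zero_sub, norm_neg, norm_mul, norm_zero]
    rw [show (0:ℝ) ^ 2 = 0 by norm_num, add_zero, Real.sqrt_sq hpa.le]
    field_simp
    try ring
  · have hqa : (0:ℝ) < ‖q‖ := norm_pos_iff.2 hq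
    have hq'a : (0:ℝ) < ‖q'‖ := norm_pos_iff.2 hq'
    have hN : (0:ℝ) < Real.sqrt (‖p‖ ^ 2 + ‖q‖ ^ 2) := by
      apply Real.sqrt_pos.2; positivity
    have hN' : (0:ℝ) < Real.sqrt (‖p'‖ ^ 2 + ‖q'‖ ^ 2) := by
      apply Real.sqrt_pos.2; positivity
    simp only [toSph, if_neg hq, if_neg hq', chordal_coe_coe]
    rw [key p q hq, key p' q' hq']
    rw [show p / q - p' / q' = (p * q' - p' * q) / (q * q') by field_simp]
    rw [norm_div, norm_mul]
    field_simp
    try ring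

lemma toSph_mul (s p q : ℂ) (hs : s ≠ 0) : toSph (s * p) (s * q) = toSph p q := by
  rcases eq_or_ne q 0 with hq | hq
  · simp [toSph, hq]
  · have : s * q ≠ 0 := mul_ne_zero hs hq
    simp only [toSph, if_neg hq, if_neg this]
    rw [mul_div_mul_left _ _ hs]

/-- A holomorphic function on the unit ball has a primitive there. -/
lemma exists_primitive {H : ℂ → ℂ} (hH : DifferentiableOn ℂ H (ball (0:ℂ) 1)) :
    ∃ P : ℂ → ℂ, ∀ z ∈ ball (0:ℂ) 1, HasDerivAt P (H z) z := by
  have hball : ∀ r : NNReal, 0 < r → (r:ℝ) < 1 →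
      HasFPowerSeriesOnBall H (cauchyPowerSeries H 0 r) 0 r := by
    intro r hr hr1
    exact (hH.mono (closedBall_subset_ball hr1)).hasFPowerSeriesOnBall hr
  set p := cauchyPowerSeries H 0 (1/2 : NNReal) with hpdef
  have hp : ∀ r : NNReal, 0 < r → (r:ℝ) < 1 → HasFPowerSeriesOnBall H p 0 r := by
    intro r hr hr1
    have h1 := hball r hr hr1
    have h2 := hball (1/2) (by norm_num) (by norm_num)
    have heq : cauchyPowerSeries H 0 r = p :=
      h1.hasFPowerSeriesAt.eq_formalMultilinearSeries h2.hasFPowerSeriesAt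
    exact heq ▸ h1
  have hrad : ∀ r : NNReal, (r:ℝ) < 1 → (r : ENNReal) < p.radius := by
    intro r hr1
    have hlt : ((r:ℝ) + 1) / 2 < 1 := by linarith
    set t : NNReal := ⟨((r:ℝ)+1)/2, by positivity⟩ with ht
    have ht0 : 0 < t := by
      rw [← NNReal.coe_lt_coe]
      show (0:ℝ) < ((r:ℝ)+1)/2
      positivity
    have ht1 : (t:ℝ) < 1 := hlt
    have h2 := (hp t ht0 ht1).r_le
    refine lt_of_lt_of_le ?_ h2
    rw [ENNReal.coe_lt_coe, ← NNReal.coe_lt_coe]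
    show (r:ℝ) < ((r:ℝ)+1)/2
    linarith
  refine ⟨fun z => ∑' n : ℕ, (p.coeff n / ((n:ℂ)+1)) * z^(n+1), ?_⟩
  intro y hy
  rw [mem_ball_zero_iff] at hy
  set r' : ℝ := (‖y‖ + 1) / 2 with hr'
  have hyr' : ‖y‖ < r' := by rw [hr']; linarith
  have hr'0 : 0 < r' := by rw [hr']; positivity
  have hr'1 : r' < 1 := by rw [hr']; linarith
  have hcoe : (r'.toNNReal : ℝ) = r' := Real.coe_toNNReal _ hr'0.le
  have hsum : Summable (fun n : ℕ => ‖p n‖ * r' ^ n) := by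
    have h := p.summable_norm_mul_pow (r := r'.toNNReal)
      (hrad r'.toNNReal (by rw [hcoe]; exact hr'1))
    simpa [hcoe] using h
  have hcoeff : ∀ n, ‖p.coeff n‖ ≤ ‖p n‖ := by
    intro n
    have h1 : p.coeff n = p n (fun _ => 1) := rfl
    rw [h1]
    calc ‖p n (fun _ => 1)‖ ≤ ‖p n‖ * ∏ _i : Fin n, ‖(1:ℂ)‖ := (p n).le_opNorm _
    _ = ‖p n‖ := by simp
  have hg : ∀ n : ℕ, ∀ z ∈ ball (0:ℂ) r',
      HasDerivAt (fun z : ℂ => (p.coeff n / ((n:ℂ)+1)) * z^(n+1)) (p.coeff n * z^n) z := by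
    intro n z _
    have h1 : HasDerivAt (fun z : ℂ => z^(n+1)) (((n:ℕ)+1 : ℂ) * z^n) z := by
      simpa using hasDerivAt_pow (n+1) z
    have h2 := h1.const_mul (p.coeff n / ((n:ℂ)+1))
    refine h2.congr_deriv ?_
    have hne : ((n:ℂ)+1) ≠ 0 := Nat.cast_add_one_ne_zero n
    have hc : ((n:ℂ)+1) * (p.coeff n / ((n:ℂ)+1)) = p.coeff n := by field_simp
    linear_combination (z^n) * hc
  have hg' : ∀ n : ℕ, ∀ z ∈ ball (0:ℂ) r', ‖p.coeff n * z^n‖ ≤ ‖p n‖ * r'^n := by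
    intro n z hz
    rw [mem_ball_zero_iff] at hz
    calc ‖p.coeff n * z^n‖ = ‖p.coeff n‖ * ‖z‖^n := by rw [norm_mul, norm_pow]
    _ ≤ ‖p n‖ * r'^n :=
        mul_le_mul (hcoeff n) (pow_le_pow_left₀ (norm_nonneg z) hz.le n) (by positivity)
          (norm_nonneg _)
  have hg0 : Summable (fun n : ℕ => (p.coeff n / ((n:ℂ)+1)) * (0:ℂ)^(n+1)) := by
    apply Summable.congr summable_zero
    intro n
    simp [zero_pow (Nat.succ_ne_zero n)]
  have hyt : y ∈ ball (0:ℂ) r' := by rwa [mem_ball_zero_iff]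
  have hder := hasDerivAt_tsum_of_isPreconnected hsum isOpen_ball
    (convex_ball (0:ℂ) r').isPreconnected hg hg' (mem_ball_self hr'0) hg0 hyt
  have hsumy : HasSum (fun n => p.coeff n * y^n) (H y) := by
    have hmem : y ∈ Metric.eball (0:ℂ) (r'.toNNReal : ENNReal) := by
      rw [mem_emetric_ball_zero_iff, enorm_eq_nnnorm, ENNReal.coe_lt_coe, ← NNReal.coe_lt_coe, coe_nnnorm, hcoe]
      exact hyr'
    have h0 := (hp r'.toNNReal (by rw [← NNReal.coe_pos, hcoe]; exact hr'0)
      (by rw [hcoe]; exact hr'1)).hasSum hmem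
    simp only [FormalMultilinearSeries.apply_eq_pow_smul_coeff, smul_eq_mul, zero_add] at h0
    exact h0.congr_fun fun n => mul_comm _ _
  rw [hsumy.tsum_eq] at hder
  exact hder

/-- A nonvanishing holomorphic function on the unit ball has a holomorphic square root. -/
lemma exists_sqrt {Q : ℂ → ℂ} (hQ : DifferentiableOn ℂ Q (ball (0:ℂ) 1))
    (hne : ∀ z ∈ ball (0:ℂ) 1, Q z ≠ 0) :
    ∃ s : ℂ → ℂ, DifferentiableOn ℂ s (ball (0:ℂ) 1) ∧ ∀ z ∈ ball (0:ℂ) 1, s z ^ 2 = Q z := by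
  have hU : IsOpen (ball (0:ℂ) 1) := isOpen_ball
  have hQd : DifferentiableOn ℂ (deriv Q) (ball (0:ℂ) 1) :=
    ((hQ.analyticOnNhd hU).deriv).differentiableOn
  have hH : DifferentiableOn ℂ (fun z => deriv Q z / Q z) (ball (0:ℂ) 1) := hQd.div hQ hne
  obtain ⟨P, hP⟩ := exists_primitive hH
  have hPd : DifferentiableOn ℂ P (ball (0:ℂ) 1) := fun z hz =>
    (hP z hz).differentiableAt.differentiableWithinAt
  have h0 : (0:ℂ) ∈ ball (0:ℂ) 1 := mem_ball_self one_pos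
  have key : ∀ z ∈ ball (0:ℂ) 1, Q z * Complex.exp (-P z) = Q 0 * Complex.exp (-P 0) := by
    intro z hz
    have hFd : DifferentiableOn ℂ (fun t => Q t * Complex.exp (-P t)) (ball (0:ℂ) 1) :=
      hQ.mul (hPd.neg.cexp)
    have hzero : ∀ w ∈ ball (0:ℂ) 1,
        fderivWithin ℂ (fun t => Q t * Complex.exp (-P t)) (ball (0:ℂ) 1) w = 0 := by
      intro w hw
      have h1 : HasDerivAt Q (deriv Q w) w := (hQ.differentiableAt (hU.mem_nhds hw)).hasDerivAt
      have h2 : HasDerivAt (fun t => Complex.exp (-P t))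
          (Complex.exp (-P w) * -(deriv Q w / Q w)) w := (hP w hw).neg.cexp
      have h3 := h1.mul h2
      have h4 : HasDerivAt (fun t => Q t * Complex.exp (-P t)) 0 w := by
        refine h3.congr_deriv ?_
        have hq : Q w * (deriv Q w / Q w) = deriv Q w := by field_simp [hne w hw]
        linear_combination (-(Complex.exp (-P w))) * hq
      have h5 : HasFDerivAt (fun t => Q t * Complex.exp (-P t))
          (ContinuousLinearMap.smulRight (1 : ℂ →L[ℂ] ℂ) (0:ℂ)) w := h4.hasFDerivAt
      rw [fderivWithin_eq_fderiv (hU.uniqueDiffOn w hw) h5.differentiableAt, h5.fderiv]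
      ext x
      simp
    exact (convex_ball (0:ℂ) 1).is_const_of_fderivWithin_eq_zero hFd hzero hz h0
  set c : ℂ := Q 0 * Complex.exp (-P 0) with hc
  have hcne : c ≠ 0 := mul_ne_zero (hne 0 h0) (Complex.exp_ne_zero _)
  refine ⟨fun z => Complex.exp (Complex.log c / 2) * Complex.exp (P z / 2), ?_, ?_⟩
  · exact ((hPd.div_const 2).cexp).const_mul _
  · intro z hz
    have hQZ : Q z = c * Complex.exp (P z) := by
      have hk := key z hz
      rw [Complex.exp_neg] at hk
      field_simp at hk
      exact hk.trans (mul_comm _ _)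
    rw [hQZ, mul_pow, pow_two, pow_two, ← Complex.exp_add, ← Complex.exp_add, add_halves,
      add_halves, Complex.exp_log hcne]

lemma sq_le_imp {a b : ℝ} (ha : 0 ≤ a) (hb : 0 ≤ b) (h : a^2 ≤ b^2) : a ≤ b := by
  nlinarith

lemma real_aux {w12 w13 w23 M1 M2 M3 d : ℝ} (hd : 0 < d)
    (hM1 : 0 < M1) (hM2 : 0 < M2) (hM3 : 0 < M3)
    (h12 : 0 < w12) (h13 : 0 < w13) (h23 : 0 ≤ w23)
    (l12 : d^2 * (M1 * M2) ≤ 4 * w12^2) (u12 : w12^2 ≤ M1 * M2)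
    (l13 : d^2 * (M1 * M3) ≤ 4 * w13^2) (u13 : w13^2 ≤ M1 * M3)
    (l23 : d^2 * (M2 * M3) ≤ 4 * w23^2) (u23 : w23^2 ≤ M2 * M3) :
    d / 2 ≤ w23 / (w12 * w13) * M1 ∧ w23 / (w12 * w13) * M1 ≤ 4 / d^2 := by
  have hlow : d * (w12 * w13) ≤ 2 * (w23 * M1) := by
    apply sq_le_imp (by positivity) (by positivity)
    have h := mul_le_mul u12 u13 (sq_nonneg w13) (by positivity : (0:ℝ) ≤ M1*M2)
    have h2 := mul_le_mul_of_nonneg_left h (sq_nonneg d)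
    have h3 := mul_le_mul_of_nonneg_right l23 (sq_nonneg M1)
    nlinarith
  have hup : d^2 * (w23 * M1) ≤ 4 * (w12 * w13) := by
    apply sq_le_imp (by positivity) (by positivity)
    have h1 := mul_le_mul_of_nonneg_left u23 (by positivity : (0:ℝ) ≤ (d^2)^2 * M1^2)
    have h2 := mul_le_mul l12 l13 (by positivity : (0:ℝ) ≤ d^2*(M1*M3))
      (by positivity : (0:ℝ) ≤ 4*w12^2)
    nlinarith
  constructor
  · rw [div_mul_eq_mul_div, le_div_iff₀ (by positivity)]
    linarith
  · rw [div_mul_eq_mul_div, div_le_div_iff₀ (by positivity) (by positivity)]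
    nlinarith

lemma wron_bounds {d w M1 M2 : ℝ} (hd : 0 < d) (hM1 : 0 < M1) (hM2 : 0 < M2) (hw : 0 ≤ w)
    (hch : d ≤ 2*w/(Real.sqrt M1 * Real.sqrt M2))
    (hch2 : 2*w/(Real.sqrt M1 * Real.sqrt M2) ≤ 2) :
    0 < w ∧ d^2*(M1*M2) ≤ 4*w^2 ∧ w^2 ≤ M1*M2 := by
  have hs1 : 0 < Real.sqrt M1 := Real.sqrt_pos.2 hM1
  have hs2 : 0 < Real.sqrt M2 := Real.sqrt_pos.2 hM2
  rw [div_le_iff₀ (by positivity)] at hch2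
  rw [le_div_iff₀ (by positivity)] at hch
  have e1 : Real.sqrt M1 ^ 2 = M1 := Real.sq_sqrt hM1.le
  have e2 : Real.sqrt M2 ^ 2 = M2 := Real.sq_sqrt hM2.le
  have hwpos : 0 < w := by
    have h : 0 < d * (Real.sqrt M1 * Real.sqrt M2) := by positivity
    linarith
  refine ⟨hwpos, ?_, ?_⟩
  · have hq := mul_le_mul hch hch
      (by positivity : (0:ℝ) ≤ d * (Real.sqrt M1 * Real.sqrt M2)) (by positivity : (0:ℝ) ≤ 2*w)
    have hrw : (d * (Real.sqrt M1 * Real.sqrt M2)) * (d * (Real.sqrt M1 * Real.sqrt M2)) =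
        d^2 * (Real.sqrt M1 ^ 2 * Real.sqrt M2 ^ 2) := by ring
    rw [e1, e2] at hrw
    rw [hrw] at hq
    nlinarith
  · have hq := mul_le_mul hch2 hch2 (by positivity : (0:ℝ) ≤ 2*w)
      (by positivity : (0:ℝ) ≤ 2*(Real.sqrt M1 * Real.sqrt M2))
    have hrw : (2*(Real.sqrt M1 * Real.sqrt M2)) * (2*(Real.sqrt M1 * Real.sqrt M2)) =
        4 * (Real.sqrt M1 ^ 2 * Real.sqrt M2 ^ 2) := by ring
    rw [e1, e2] at hrw
    rw [hrw] at hq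
    nlinarith

lemma exists_normal_pair {a b c : ℂ → OnePoint ℂ}
    (ha : MeromorphicOnSph (ball (0:ℂ) 1) a) (hb : MeromorphicOnSph (ball (0:ℂ) 1) b)
    (hc : MeromorphicOnSph (ball (0:ℂ) 1) c) {d : ℝ} (hd : 0 < d)
    (hsep : ∀ z ∈ ball (0:ℂ) 1, d ≤ chordal (a z) (b z) ∧ d ≤ chordal (a z) (c z) ∧
      d ≤ chordal (b z) (c z)) :
    ∃ B D : ℂ → ℂ, DifferentiableOn ℂ B (ball (0:ℂ) 1) ∧ DifferentiableOn ℂ D (ball (0:ℂ) 1) ∧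
      ∀ z ∈ ball (0:ℂ) 1, a z = toSph (B z) (D z) ∧
        d/2 ≤ ‖B z‖ ^ 2 + ‖D z‖ ^ 2 ∧
        ‖B z‖ ^ 2 + ‖D z‖ ^ 2 ≤ 4 / d^2 := by
  obtain ⟨f1, g1, hf1, hg1, hnz1, hrep1⟩ := ha
  obtain ⟨f2, g2, hf2, hg2, hnz2, hrep2⟩ := hb
  obtain ⟨f3, g3, hf3, hg3, hnz3, hrep3⟩ := hc
  set U := ball (0:ℂ) 1 with hU
  set W12 : ℂ → ℂ := fun z => f1 z * g2 z - f2 z * g1 z with hW12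
  set W13 : ℂ → ℂ := fun z => f1 z * g3 z - f3 z * g1 z with hW13
  set W23 : ℂ → ℂ := fun z => f2 z * g3 z - f3 z * g2 z with hW23
  have hW12d : DifferentiableOn ℂ W12 U := (hf1.mul hg2).sub (hf2.mul hg1)
  have hW13d : DifferentiableOn ℂ W13 U := (hf1.mul hg3).sub (hf3.mul hg1)
  have hW23d : DifferentiableOn ℂ W23 U := (hf2.mul hg3).sub (hf3.mul hg2)
  -- pointwise bounds
  have key : ∀ z ∈ U, ∃ M1 M2 M3 : ℝ, 0 < M1 ∧ 0 < M2 ∧ 0 < M3 ∧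
      M1 = ‖f1 z‖ ^ 2 + ‖g1 z‖ ^ 2 ∧
      M2 = ‖f2 z‖ ^ 2 + ‖g2 z‖ ^ 2 ∧
      M3 = ‖f3 z‖ ^ 2 + ‖g3 z‖ ^ 2 ∧
      (0 < ‖W12 z‖ ∧ d^2*(M1*M2) ≤ 4*‖W12 z‖^2 ∧
        ‖W12 z‖^2 ≤ M1*M2) ∧
      (0 < ‖W13 z‖ ∧ d^2*(M1*M3) ≤ 4*‖W13 z‖^2 ∧
        ‖W13 z‖^2 ≤ M1*M3) ∧
      (0 < ‖W23 z‖ ∧ d^2*(M2*M3) ≤ 4*‖W23 z‖^2 ∧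
        ‖W23 z‖^2 ≤ M2*M3) := by
    intro z hz
    obtain ⟨h12, h13, h23⟩ := hsep z hz
    have hM1 : (0:ℝ) < ‖f1 z‖ ^ 2 + ‖g1 z‖ ^ 2 := by
      rcases not_and_or.1 (hnz1 z hz) with h | h
      · have := norm_pos_iff.2 h; positivity
      · have := norm_pos_iff.2 h; positivity
    have hM2 : (0:ℝ) < ‖f2 z‖ ^ 2 + ‖g2 z‖ ^ 2 := by
      rcases not_and_or.1 (hnz2 z hz) with h | h
      · have := norm_pos_iff.2 h; positivity
      · have := norm_pos_iff.2 h; positivity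
    have hM3 : (0:ℝ) < ‖f3 z‖ ^ 2 + ‖g3 z‖ ^ 2 := by
      rcases not_and_or.1 (hnz3 z hz) with h | h
      · have := norm_pos_iff.2 h; positivity
      · have := norm_pos_iff.2 h; positivity
    have e12 : chordal (a z) (b z) = 2 * ‖W12 z‖ /
        (Real.sqrt (‖f1 z‖ ^ 2 + ‖g1 z‖ ^ 2) *
          Real.sqrt (‖f2 z‖ ^ 2 + ‖g2 z‖ ^ 2)) := by
      rw [hrep1 z hz, hrep2 z hz, chordal_toSph _ _ _ _ (hnz1 z hz) (hnz2 z hz)]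
    have e13 : chordal (a z) (c z) = 2 * ‖W13 z‖ /
        (Real.sqrt (‖f1 z‖ ^ 2 + ‖g1 z‖ ^ 2) *
          Real.sqrt (‖f3 z‖ ^ 2 + ‖g3 z‖ ^ 2)) := by
      rw [hrep1 z hz, hrep3 z hz, chordal_toSph _ _ _ _ (hnz1 z hz) (hnz3 z hz)]
    have e23 : chordal (b z) (c z) = 2 * ‖W23 z‖ /
        (Real.sqrt (‖f2 z‖ ^ 2 + ‖g2 z‖ ^ 2) *
          Real.sqrt (‖f3 z‖ ^ 2 + ‖g3 z‖ ^ 2)) := by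
      rw [hrep2 z hz, hrep3 z hz, chordal_toSph _ _ _ _ (hnz2 z hz) (hnz3 z hz)]
    rw [e12] at h12
    rw [e13] at h13
    rw [e23] at h23
    have c12 := (e12 ▸ chordal_le_two (a z) (b z))
    have c13 := (e13 ▸ chordal_le_two (a z) (c z))
    have c23 := (e23 ▸ chordal_le_two (b z) (c z))
    refine ⟨_, _, _, hM1, hM2, hM3, rfl, rfl, rfl,
      wron_bounds hd hM1 hM2 (norm_nonneg _) h12 c12,
      wron_bounds hd hM1 hM3 (norm_nonneg _) h13 c13,
      wron_bounds hd hM2 hM3 (norm_nonneg _) h23 c23⟩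
  have hW12ne : ∀ z ∈ U, W12 z ≠ 0 := by
    intro z hz
    obtain ⟨M1, M2, M3, _, _, _, _, _, _, ⟨hpos, _, _⟩, _, _⟩ := key z hz
    exact fun h => by simp [h] at hpos
  have hW13ne : ∀ z ∈ U, W13 z ≠ 0 := by
    intro z hz
    obtain ⟨M1, M2, M3, _, _, _, _, _, _, _, ⟨hpos, _, _⟩, _⟩ := key z hz
    exact fun h => by simp [h] at hpos
  have hW23ne : ∀ z ∈ U, W23 z ≠ 0 := by
    intro z hz
    obtain ⟨M1, M2, M3, _, _, _, _, _, _, _, _, ⟨hpos, _, _⟩⟩ := key z hz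
    exact fun h => by simp [h] at hpos
  set Q : ℂ → ℂ := fun z => W23 z / (W12 z * W13 z) with hQdef
  have hQd : DifferentiableOn ℂ Q U :=
    hW23d.div (hW12d.mul hW13d) (fun z hz => mul_ne_zero (hW12ne z hz) (hW13ne z hz))
  have hQne : ∀ z ∈ U, Q z ≠ 0 := fun z hz =>
    div_ne_zero (hW23ne z hz) (mul_ne_zero (hW12ne z hz) (hW13ne z hz))
  obtain ⟨s, hsd, hs2⟩ := exists_sqrt hQd hQne
  have hsne : ∀ z ∈ U, s z ≠ 0 := by
    intro z hz h
    have := hs2 z hz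
    rw [h] at this
    simp at this
    exact hQne z hz this.symm
  refine ⟨fun z => s z * f1 z, fun z => s z * g1 z, hsd.mul hf1, hsd.mul hg1, ?_⟩
  intro z hz
  obtain ⟨M1, M2, M3, hM1, hM2, hM3, hM1e, hM2e, hM3e, ⟨h12p, h12l, h12u⟩,
    ⟨h13p, h13l, h13u⟩, ⟨h23p, h23l, h23u⟩⟩ := key z hz
  have habs : ‖s z * f1 z‖ ^ 2 + ‖s z * g1 z‖ ^ 2 =
      ‖W23 z‖ / (‖W12 z‖ * ‖W13 z‖) * M1 := by
    rw [norm_mul, norm_mul, hM1e]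
    have : ‖s z‖ ^ 2 = ‖W23 z‖ /
        (‖W12 z‖ * ‖W13 z‖) := by
      rw [← norm_pow, hs2 z hz, hQdef]
      simp [norm_div, norm_mul]
    rw [mul_pow, mul_pow, ← mul_add, this]
  obtain ⟨hlow, hup⟩ := real_aux hd hM1 hM2 hM3 h12p h13p (norm_nonneg _)
    h12l h12u h13l h13u h23l h23u
  refine ⟨?_, ?_, ?_⟩
  · rw [hrep1 z hz, toSph_mul _ _ _ (hsne z hz)]
  · rw [habs]; exact hlow
  · rw [habs]; exact hup

lemma lip_of_bounded {G : ℂ → ℂ} {C r : ℝ} (hG : DifferentiableOn ℂ G (ball (0:ℂ) 1))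
    (hb : ∀ z ∈ ball (0:ℂ) 1, ‖G z‖ ≤ C) (hr0 : 0 < r) (hr1 : r < 1) :
    ∀ z ∈ closedBall (0:ℂ) r, ∀ w ∈ closedBall (0:ℂ) r,
      ‖G z - G w‖ ≤ (2*C+1)/(1-r) * ‖z - w‖ := by
  have hderiv : ∀ z ∈ closedBall (0:ℂ) r, ‖deriv G z‖ ≤ (2*C+1)/(1-r) := by
    intro z hz
    have hz' : ‖z‖ ≤ r := mem_closedBall_zero_iff.1 hz
    have hsub : ball z (1-r) ⊆ ball (0:ℂ) 1 := by
      intro x hx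
      rw [mem_ball, dist_eq_norm] at hx
      rw [mem_ball_zero_iff]
      calc ‖x‖ = ‖(x - z) + z‖ := by ring_nf
        _ ≤ ‖x - z‖ + ‖z‖ := norm_add_le _ _
        _ < (1-r) + r := add_lt_add_of_lt_of_le hx hz'
        _ = 1 := by ring
    have hmaps : Set.MapsTo G (ball z (1-r)) (ball (G z) (2*C+1)) := by
      intro x hx
      rw [mem_ball, dist_eq_norm]
      have hzU : z ∈ ball (0:ℂ) 1 := hsub (mem_ball_self (by linarith))
      calc ‖G x - G z‖ ≤ ‖G x‖ + ‖G z‖ := norm_sub_le _ _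
        _ ≤ C + C := add_le_add (hb x (hsub hx)) (hb z hzU)
        _ < 2*C+1 := by linarith
    exact Complex.norm_deriv_le_div_of_mapsTo_ball (hG.mono hsub) (hmaps.mono_right ball_subset_closedBall) (by linarith)
  intro z hz w hw
  exact (convex_closedBall (0:ℂ) r).norm_image_sub_le_of_norm_hasDerivWithin_le
    (f' := deriv G)
    (fun x hx => ((hG.differentiableAt
      (isOpen_ball.mem_nhds (closedBall_subset_ball hr1 hx))).hasDerivAt).hasDerivWithinAt)
    hderiv hw hz

lemma normal_of_pairs {A : ℕ → ℂ → OnePoint ℂ} {B D : ℕ → ℂ → ℂ} {C m : ℝ}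
    (hC : 0 < C) (hm : 0 < m)
    (hBd : ∀ n, DifferentiableOn ℂ (B n) (ball (0:ℂ) 1))
    (hDd : ∀ n, DifferentiableOn ℂ (D n) (ball (0:ℂ) 1))
    (hrep : ∀ n, ∀ z ∈ ball (0:ℂ) 1, A n z = toSph (B n z) (D n z))
    (hub : ∀ n, ∀ z ∈ ball (0:ℂ) 1,
      ‖B n z‖^2 + ‖D n z‖^2 ≤ C^2)
    (hlb : ∀ n, ∀ z ∈ ball (0:ℂ) 1,
      m ≤ ‖B n z‖^2 + ‖D n z‖^2) :
    ∃ φ : ℕ → ℕ, StrictMono φ ∧ ∃ h : ℂ → OnePoint ℂ,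
      ∀ K : Set ℂ, K ⊆ ball (0 : ℂ) 1 → IsCompact K → ∀ δ : ℝ, 0 < δ →
        ∀ᶠ n in atTop, ∀ z ∈ K, sphDist (A (φ n) z) (h z) < δ := by
  classical
  have hBb : ∀ n, ∀ z ∈ ball (0:ℂ) 1, ‖B n z‖ ≤ C := by
    intro n z hz
    have h1 := hub n z hz
    have h2 : (0:ℝ) ≤ ‖B n z‖ := norm_nonneg _
    have h3 : (0:ℝ) ≤ ‖D n z‖ := norm_nonneg _
    nlinarith
  have hDb : ∀ n, ∀ z ∈ ball (0:ℂ) 1, ‖D n z‖ ≤ C := by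
    intro n z hz
    have h1 := hub n z hz
    have h2 : (0:ℝ) ≤ ‖B n z‖ := norm_nonneg _
    have h3 : (0:ℝ) ≤ ‖D n z‖ := norm_nonneg _
    nlinarith
  set F : ℕ → ℂ → ℂ × ℂ := fun n z => (B n z, D n z) with hF
  have hFb : ∀ n, ∀ z ∈ ball (0:ℂ) 1, ‖F n z‖ ≤ C := by
    intro n z hz
    rw [Prod.norm_def]
    exact max_le (hBb n z hz) (hDb n z hz)
  have hLip : ∀ r, 0 < r → r < 1 → ∀ n, ∀ z ∈ closedBall (0:ℂ) r, ∀ w ∈ closedBall (0:ℂ) r,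
      dist (F n z) (F n w) ≤ (2*C+1)/(1-r) * dist z w := by
    intro r hr0 hr1 n z hz w hw
    rw [Prod.dist_eq]
    apply max_le
    · rw [dist_eq_norm, dist_eq_norm]
      exact lip_of_bounded (hBd n) (hBb n) hr0 hr1 z hz w hw
    · rw [dist_eq_norm, dist_eq_norm]
      exact lip_of_bounded (hDd n) (hDb n) hr0 hr1 z hz w hw
  -- dense sequence in the ball
  obtain ⟨S, hScount, hSdense⟩ := TopologicalSpace.exists_countable_dense ℂ
  obtain ⟨e, hSe⟩ := hScount.exists_eq_range hSdense.nonempty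
  set dd : ℕ → ℂ := fun k => if e k ∈ ball (0:ℂ) 1 then e k else 0 with hdd
  have hddU : ∀ k, dd k ∈ ball (0:ℂ) 1 := by
    intro k
    by_cases h : e k ∈ ball (0:ℂ) 1
    · simp only [hdd, if_pos h]
      exact h
    · simp only [hdd, if_neg h]
      exact mem_ball_self one_pos
  have hddDense : ∀ W : Set ℂ, IsOpen W → W.Nonempty → W ⊆ ball (0:ℂ) 1 → ∃ k, dd k ∈ W := by
    intro W hWo hWne hWU
    obtain ⟨x, hxW, hxS⟩ := hSdense.inter_open_nonempty W hWo hWne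
    obtain ⟨k, hk⟩ : ∃ k, e k = x := by
      have : x ∈ Set.range e := hSe ▸ hxS
      exact this
    refine ⟨k, ?_⟩
    have hkU : e k ∈ ball (0:ℂ) 1 := hk ▸ hWU hxW
    simp only [hdd, if_pos hkU]
    exact hk ▸ hxW
  -- extract pointwise convergent subsequence on the dense set
  have hTc : IsCompact (Set.univ.pi (fun _ : ℕ => closedBall (0:ℂ × ℂ) C)) :=
    isCompact_univ_pi (fun _ => isCompact_closedBall _ _)
  have hmemT : ∀ n, (fun k => F n (dd k)) ∈ Set.univ.pi (fun _ : ℕ => closedBall (0:ℂ × ℂ) C) := by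
    intro n
    rw [Set.mem_univ_pi]
    intro k
    rw [mem_closedBall_zero_iff]
    exact hFb n (dd k) (hddU k)
  obtain ⟨vL, hvLT, φ, hφ, hconv⟩ := hTc.tendsto_subseq hmemT
  have hconvk : ∀ k, Tendsto (fun n => F (φ n) (dd k)) atTop (𝓝 (vL k)) := by
    intro k
    have := tendsto_pi_nhds.1 hconv k
    exact this
  -- uniform Cauchy on closed balls
  have hUC : ∀ r, 0 < r → r < 1 →
      UniformCauchySeqOn (fun n z => F (φ n) z) atTop (closedBall (0:ℂ) r) := by
    intro r hr0 hr1
    rw [Metric.uniformCauchySeqOn_iff]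
    intro η hη
    set r2 : ℝ := (r+1)/2 with hr2
    have hr20 : 0 < r2 := by rw [hr2]; linarith
    have hr21 : r2 < 1 := by rw [hr2]; linarith
    set L : ℝ := (2*C+1)/(1-r2) with hL
    have hL0 : 0 < L := by
      rw [hL]
      apply div_pos (by linarith) (by linarith)
    set ρ : ℝ := min ((1-r)/4) (η/(8*L)) with hρ
    have hρ0 : 0 < ρ := lt_min (by linarith) (by positivity)
    have hcov : closedBall (0:ℂ) r ⊆ ⋃ x ∈ closedBall (0:ℂ) r, ball x ρ := by
      intro x hx
      exact Set.mem_biUnion hx (mem_ball_self hρ0)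
    obtain ⟨t, hts, htfin, htcov⟩ := (isCompact_closedBall (0:ℂ) r).elim_finite_subcover_image
      (fun x _ => isOpen_ball) hcov
    have hsel : ∀ x ∈ t, ∃ k, dd k ∈ ball x ρ := by
      intro x hxt
      have hxU : x ∈ ball (0:ℂ) 1 := closedBall_subset_ball hr1 (hts hxt)
      obtain ⟨k, hk⟩ := hddDense (ball x ρ ∩ ball (0:ℂ) 1) (isOpen_ball.inter isOpen_ball)
        ⟨x, mem_ball_self hρ0, hxU⟩ Set.inter_subset_right
      exact ⟨k, hk.1⟩
    have hcau' : ∀ x : ℂ, ∃ N, ∀ hxt : x ∈ t, ∀ p ≥ N, ∀ q ≥ N,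
        dist (F (φ p) (dd (hsel x hxt).choose)) (F (φ q) (dd (hsel x hxt).choose)) < η/3 := by
      intro x
      by_cases hxt : x ∈ t
      · have hc := (hconvk ((hsel x hxt).choose)).cauchySeq
        rw [Metric.cauchySeq_iff] at hc
        obtain ⟨N, hN⟩ := hc (η/3) (by linarith)
        exact ⟨N, fun _ => hN⟩
      · exact ⟨0, fun h => absurd h hxt⟩
    choose NN hNN using hcau'
    refine ⟨htfin.toFinset.sup NN, ?_⟩
    intro p hp q hq z hz
    obtain ⟨x, hxt, hzx⟩ : ∃ x ∈ t, z ∈ ball x ρ := by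
      simpa using htcov hz
    set y : ℂ := dd (hsel x hxt).choose with hy
    have hyb : y ∈ ball x ρ := (hsel x hxt).choose_spec
    have hxN : NN x ≤ htfin.toFinset.sup NN := Finset.le_sup (htfin.mem_toFinset.2 hxt)
    have hdk := hNN x hxt p (le_trans hxN hp) q (le_trans hxN hq)
    have hxr : ‖x‖ ≤ r := mem_closedBall_zero_iff.1 (hts hxt)
    have hzr2 : z ∈ closedBall (0:ℂ) r2 := by
      rw [mem_closedBall_zero_iff]
      have : ‖z‖ ≤ r := mem_closedBall_zero_iff.1 hz
      rw [hr2]; linarith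
    have hρr : ρ ≤ (1-r)/4 := min_le_left _ _
    have hρη : ρ ≤ η/(8*L) := min_le_right _ _
    have hyr2 : y ∈ closedBall (0:ℂ) r2 := by
      rw [mem_closedBall_zero_iff]
      have h1 : dist y x < ρ := mem_ball.1 hyb
      calc ‖y‖ = ‖(y - x) + x‖ := by ring_nf
        _ ≤ ‖y - x‖ + ‖x‖ := norm_add_le _ _
        _ ≤ ρ + r := by
            rw [← dist_eq_norm]
            exact add_le_add h1.le hxr
        _ ≤ r2 := by rw [hr2]; linarith
    have hdzy : dist z y ≤ 2*ρ := by
      calc dist z y ≤ dist z x + dist x y := dist_triangle _ _ _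
        _ ≤ ρ + ρ := add_le_add (mem_ball.1 hzx).le (by rw [dist_comm]; exact (mem_ball.1 hyb).le)
        _ = 2*ρ := by ring
    have hLz := hLip r2 hr20 hr21 (φ p) z hzr2 y hyr2
    have hLz' := hLip r2 hr20 hr21 (φ q) y hyr2 z hzr2
    have hbd : L * dist z y ≤ η/4 := by
      calc L * dist z y ≤ L * (2*ρ) := mul_le_mul_of_nonneg_left hdzy hL0.le
        _ ≤ L * (2*(η/(8*L))) := by
            apply mul_le_mul_of_nonneg_left _ hL0.le
            linarith
        _ = η/4 := by field_simp; ring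
    have hbd' : L * dist y z ≤ η/4 := by rw [dist_comm]; exact hbd
    calc dist (F (φ p) z) (F (φ q) z)
        ≤ dist (F (φ p) z) (F (φ p) y) + dist (F (φ p) y) (F (φ q) y) +
          dist (F (φ q) y) (F (φ q) z) := dist_triangle4 _ _ _ _
      _ ≤ L * dist z y + η/3 + L * dist y z := by
          apply add_le_add (add_le_add hLz hdk.le) hLz'
      _ ≤ η/4 + η/3 + η/4 := by
          apply add_le_add (add_le_add hbd le_rfl) hbd'
      _ < η := by linarith
  -- pointwise limits
  have hpt : ∀ z ∈ ball (0:ℂ) 1, ∃ l, Tendsto (fun n => F (φ n) z) atTop (𝓝 l) := by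
    intro z hz
    have hz1 : ‖z‖ < 1 := mem_ball_zero_iff.1 hz
    have hc := (hUC ((‖z‖+1)/2) (by positivity) (by linarith)).cauchySeq
      (x := z) (by rw [mem_closedBall_zero_iff]; linarith)
    exact cauchySeq_tendsto_of_complete hc
  choose! u hu using hpt
  have hTU : ∀ r, 0 < r → r < 1 →
      TendstoUniformlyOn (fun n z => F (φ n) z) u atTop (closedBall (0:ℂ) r) := by
    intro r h0 h1
    exact (hUC r h0 h1).tendstoUniformlyOn_of_tendsto
      (fun z hz => hu z (closedBall_subset_ball h1 hz))
  have habscont : Continuous (fun p : ℂ × ℂ => ‖p.1‖^2 + ‖p.2‖^2) :=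
    ((continuous_norm.comp continuous_fst).pow 2).add
      ((continuous_norm.comp continuous_snd).pow 2)
  have hulb : ∀ z ∈ ball (0:ℂ) 1, m ≤ ‖(u z).1‖^2 + ‖(u z).2‖^2 := by
    intro z hz
    apply ge_of_tendsto ((habscont.tendsto (u z)).comp (hu z hz))
    exact Eventually.of_forall fun n => hlb (φ n) z hz
  have huub : ∀ z ∈ ball (0:ℂ) 1, ‖(u z).1‖^2 + ‖(u z).2‖^2 ≤ C^2 := by
    intro z hz
    apply le_of_tendsto ((habscont.tendsto (u z)).comp (hu z hz))
    exact Eventually.of_forall fun n => hub (φ n) z hz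
  -- the limit function on the sphere
  refine ⟨φ, hφ, fun z => toSph (u z).1 (u z).2, ?_⟩
  intro K hKU hK δ hδ
  obtain ⟨r, hr0, hr1, hKr⟩ : ∃ r, 0 < r ∧ r < 1 ∧ K ⊆ closedBall (0:ℂ) r := by
    rcases K.eq_empty_or_nonempty with hKe | hKne
    · exact ⟨1/2, by norm_num, by norm_num, by rw [hKe]; exact Set.empty_subset _⟩
    · obtain ⟨x0, hx0K, hx0⟩ := hK.exists_isMaxOn hKne continuous_norm.continuousOn
      have hx01 : ‖x0‖ < 1 := mem_ball_zero_iff.1 (hKU hx0K)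
      refine ⟨(‖x0‖+1)/2, by positivity, by linarith, ?_⟩
      intro z hz
      rw [mem_closedBall_zero_iff]
      have h2 : ‖z‖ ≤ ‖x0‖ := hx0 hz
      linarith
  have hπ := Real.pi_pos
  set ε' : ℝ := m*δ/(4*Real.pi*C) with hε'
  have hε'0 : 0 < ε' := by rw [hε']; positivity
  have hev := (Metric.tendstoUniformlyOn_iff.1 (hTU r hr0 hr1)) ε' hε'0
  filter_upwards [hev] with n hn z hzK
  have hzU : z ∈ ball (0:ℂ) 1 := hKU hzK
  have hdist : dist (u z) (F (φ n) z) < ε' := hn z (hKr hzK)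
  have hBn : ¬(B (φ n) z = 0 ∧ D (φ n) z = 0) := by
    rintro ⟨h1, h2⟩
    have := hlb (φ n) z hzU
    rw [h1, h2] at this
    simp at this
    linarith
  have hun : ¬((u z).1 = 0 ∧ (u z).2 = 0) := by
    rintro ⟨h1, h2⟩
    have := hulb z hzU
    rw [h1, h2] at this
    simp at this
    linarith
  rw [hrep (φ n) z hzU]
  have hch := sphDist_le_chordal_mul (toSph (B (φ n) z) (D (φ n) z)) (toSph (u z).1 (u z).2)
  rw [chordal_toSph _ _ _ _ hBn hun] at hch
  -- numerator bound
  have hd1 : ‖(B (φ n) z - (u z).1)‖ ≤ ε' := by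
    have h1 : dist (B (φ n) z) ((u z).1) ≤ dist (F (φ n) z) (u z) := by
      rw [Prod.dist_eq]
      exact le_max_left _ _
    rw [Complex.dist_eq] at h1
    rw [dist_comm] at hdist
    linarith
  have hd2 : ‖((u z).2 - D (φ n) z)‖ ≤ ε' := by
    have h1 : dist (D (φ n) z) ((u z).2) ≤ dist (F (φ n) z) (u z) := by
      rw [Prod.dist_eq]
      exact le_max_right _ _
    rw [Complex.dist_eq] at h1
    rw [dist_comm] at hdist
    rw [show (u z).2 - D (φ n) z = -(D (φ n) z - (u z).2) by ring, norm_neg]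
    linarith
  have hBnC : ‖(B (φ n) z)‖ ≤ C := by
    exact hBb (φ n) z hzU
  have hDnC : ‖(D (φ n) z)‖ ≤ C := by
    exact hDb (φ n) z hzU
  have hnum : ‖(B (φ n) z * (u z).2 - (u z).1 * D (φ n) z)‖ ≤ 2*C*ε' := by
    calc ‖(B (φ n) z * (u z).2 - (u z).1 * D (φ n) z)‖
        = ‖(B (φ n) z * ((u z).2 - D (φ n) z) +
            (B (φ n) z - (u z).1) * D (φ n) z)‖ := by ring_nf
      _ ≤ ‖(B (φ n) z * ((u z).2 - D (φ n) z))‖ +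
            ‖((B (φ n) z - (u z).1) * D (φ n) z)‖ := norm_add_le _ _
      _ = ‖(B (φ n) z)‖ * ‖((u z).2 - D (φ n) z)‖ +
            ‖(B (φ n) z - (u z).1)‖ * ‖(D (φ n) z)‖ := by
          rw [norm_mul, norm_mul]
      _ ≤ C * ε' + ε' * C := by
          apply add_le_add
          · exact mul_le_mul hBnC hd2 (norm_nonneg _) hC.le
          · exact mul_le_mul hd1 hDnC (norm_nonneg _) hε'0.le
      _ = 2*C*ε' := by ring
  -- denominator bound
  have hden1 : Real.sqrt m ≤
      Real.sqrt (‖(B (φ n) z)‖^2 + ‖(D (φ n) z)‖^2) :=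
    Real.sqrt_le_sqrt (hlb (φ n) z hzU)
  have hden2 : Real.sqrt m ≤ Real.sqrt (‖((u z).1)‖^2 + ‖((u z).2)‖^2) :=
    Real.sqrt_le_sqrt (hulb z hzU)
  have hsm : 0 < Real.sqrt m := Real.sqrt_pos.2 hm
  have hfrac : 2 * ‖(B (φ n) z * (u z).2 - (u z).1 * D (φ n) z)‖ /
      (Real.sqrt (‖(B (φ n) z)‖^2 + ‖(D (φ n) z)‖^2) *
        Real.sqrt (‖((u z).1)‖^2 + ‖((u z).2)‖^2)) ≤
      2 * (2*C*ε') / m := by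
    have hm' : m = Real.sqrt m * Real.sqrt m := (Real.mul_self_sqrt hm.le).symm
    rw [hm']
    apply div_le_div₀ (by positivity) (by linarith [hnum]) (by positivity)
    exact mul_le_mul hden1 hden2 hsm.le (le_trans hsm.le hden1)
  have hfinal : Real.pi/2 * (2*(2*C*ε')/m) = δ/2 := by
    rw [hε']
    field_simp
    ring
  calc sphDist (toSph (B (φ n) z) (D (φ n) z)) (toSph (u z).1 (u z).2)
      ≤ Real.pi/2 * (2 * ‖(B (φ n) z * (u z).2 - (u z).1 * D (φ n) z)‖ /
        (Real.sqrt (‖(B (φ n) z)‖^2 + ‖(D (φ n) z)‖^2) *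
          Real.sqrt (‖((u z).1)‖^2 + ‖((u z).2)‖^2))) := hch
    _ ≤ Real.pi/2 * (2*(2*C*ε')/m) := by
        apply mul_le_mul_of_nonneg_left hfrac (by linarith)
    _ = δ/2 := hfinal
    _ < δ := by linarith

lemma normal_coord (G : Set ((ℂ → OnePoint ℂ) × (ℂ → OnePoint ℂ) × (ℂ → OnePoint ℂ)))
    (hmero : ∀ t ∈ G, MeromorphicOnSph (ball (0 : ℂ) 1) t.1 ∧
      MeromorphicOnSph (ball (0 : ℂ) 1) t.2.1 ∧ MeromorphicOnSph (ball (0 : ℂ) 1) t.2.2)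
    (ε : ℝ) (hε : 0 < ε)
    (hsep : ∀ t ∈ G, ∀ z ∈ ball (0 : ℂ) 1,
      ε ≤ sphDist (t.1 z) (t.2.1 z) * sphDist (t.1 z) (t.2.2 z) *
        sphDist (t.2.1 z) (t.2.2 z)) :
    ∀ a : ℕ → ℂ → OnePoint ℂ, (∀ n, ∃ b c, (a n, b, c) ∈ G) →
      ∃ φ : ℕ → ℕ, StrictMono φ ∧ ∃ h : ℂ → OnePoint ℂ,
        ∀ K : Set ℂ, K ⊆ ball (0 : ℂ) 1 → IsCompact K → ∀ δ : ℝ, 0 < δ →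
          ∀ᶠ n in atTop, ∀ z ∈ K, sphDist (a (φ n) z) (h z) < δ := by
  intro a ha
  choose b c hbc using ha
  have hπ := Real.pi_pos
  set d : ℝ := 2*ε/Real.pi^3 with hd
  have hd0 : 0 < d := by rw [hd]; positivity
  have key2 : ∀ s1 s2 s3 : ℝ, 0 ≤ s1 → 0 ≤ s2 → 0 ≤ s3 → s2 ≤ Real.pi → s3 ≤ Real.pi →
      ε ≤ s1*s2*s3 → ε/Real.pi^2 ≤ s1 := by
    intro s1 s2 s3 h1 h2 h3 hp2 hp3 hε'
    rw [div_le_iff₀ (by positivity : (0:ℝ) < Real.pi^2)]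
    calc ε ≤ s1*s2*s3 := hε'
      _ ≤ s1*Real.pi*Real.pi := by
          have h4 : s1*s2 ≤ s1*Real.pi := mul_le_mul_of_nonneg_left hp2 h1
          have h5 : s1*s2*s3 ≤ (s1*Real.pi)*s3 := mul_le_mul_of_nonneg_right h4 h3
          have h6 : (s1*Real.pi)*s3 ≤ (s1*Real.pi)*Real.pi :=
            mul_le_mul_of_nonneg_left hp3 (by positivity)
          linarith
      _ = s1*Real.pi^2 := by ring
  have step : ∀ x y : OnePoint ℂ, ε/Real.pi^2 ≤ sphDist x y → d ≤ chordal x y := by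
    intro x y hs
    have h1 := le_trans hs (sphDist_le_chordal_mul x y)
    rw [hd, div_le_iff₀ (by positivity : (0:ℝ) < Real.pi^3)]
    have h2 := mul_le_mul_of_nonneg_left h1 (by positivity : (0:ℝ) ≤ 2*Real.pi^2)
    calc 2*ε = 2*Real.pi^2*(ε/Real.pi^2) := by
          field_simp
          try ring
      _ ≤ 2*Real.pi^2*(Real.pi/2*chordal x y) := h2
      _ = chordal x y * Real.pi^3 := by ring
  have hchord : ∀ n, ∀ z ∈ ball (0:ℂ) 1,
      d ≤ chordal (a n z) (b n z) ∧ d ≤ chordal (a n z) (c n z) ∧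
        d ≤ chordal (b n z) (c n z) := by
    intro n z hz
    have h := hsep _ (hbc n) z hz
    simp only at h
    have n12 := sphDist_nonneg (a n z) (b n z)
    have n13 := sphDist_nonneg (a n z) (c n z)
    have n23 := sphDist_nonneg (b n z) (c n z)
    have p12 := sphDist_le_pi (a n z) (b n z)
    have p13 := sphDist_le_pi (a n z) (c n z)
    have p23 := sphDist_le_pi (b n z) (c n z)
    refine ⟨step _ _ (key2 _ _ _ n12 n13 n23 p13 p23 h), step _ _ ?_, step _ _ ?_⟩
    · apply key2 _ (sphDist (a n z) (b n z)) (sphDist (b n z) (c n z)) n13 n12 n23 p12 p23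
      calc ε ≤ sphDist (a n z) (b n z) * sphDist (a n z) (c n z) *
          sphDist (b n z) (c n z) := h
        _ = sphDist (a n z) (c n z) * sphDist (a n z) (b n z) *
          sphDist (b n z) (c n z) := by ring
    · apply key2 _ (sphDist (a n z) (b n z)) (sphDist (a n z) (c n z)) n23 n12 n13 p12 p13
      calc ε ≤ sphDist (a n z) (b n z) * sphDist (a n z) (c n z) *
          sphDist (b n z) (c n z) := h
        _ = sphDist (b n z) (c n z) * sphDist (a n z) (b n z) *
          sphDist (a n z) (c n z) := by ring
  have hex : ∀ n, ∃ B D : ℂ → ℂ, DifferentiableOn ℂ B (ball (0:ℂ) 1) ∧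
      DifferentiableOn ℂ D (ball (0:ℂ) 1) ∧ ∀ z ∈ ball (0:ℂ) 1,
        a n z = toSph (B z) (D z) ∧
        d/2 ≤ ‖B z‖ ^ 2 + ‖D z‖ ^ 2 ∧
        ‖B z‖ ^ 2 + ‖D z‖ ^ 2 ≤ 4/d^2 := by
    intro n
    obtain ⟨h1, h2, h3⟩ := hmero _ (hbc n)
    exact exists_normal_pair h1 h2 h3 hd0 (hchord n)
  choose B D hBd hDd hprops using hex
  apply normal_of_pairs (C := 2/d) (m := d/2) (by positivity) (by positivity) hBd hDd
    (fun n z hz => (hprops n z hz).1)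
    (fun n z hz => by
      rw [show (2/d)^2 = 4/d^2 by rw [div_pow]; norm_num]
      exact (hprops n z hz).2.2)
    (fun n z hz => (hprops n z hz).2.1)


/-- If `𝒢` is a family of triples `(a,b,c)` of meromorphic (or `≡ ∞`) functions on the unit
disk whose mutual spherical distances have product at least `ε > 0` everywhere, then each of
the three coordinate families is normal in the unit disk. -/
theorem stmt_15
    (G : Set ((ℂ → OnePoint ℂ) × (ℂ → OnePoint ℂ) × (ℂ → OnePoint ℂ)))
    (hmero : ∀ t ∈ G, MeromorphicOnSph (ball (0 : ℂ) 1) t.1 ∧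
      MeromorphicOnSph (ball (0 : ℂ) 1) t.2.1 ∧ MeromorphicOnSph (ball (0 : ℂ) 1) t.2.2)
    (ε : ℝ) (hε : 0 < ε)
    (hsep : ∀ t ∈ G, ∀ z ∈ ball (0 : ℂ) 1,
      ε ≤ sphDist (t.1 z) (t.2.1 z) * sphDist (t.1 z) (t.2.2 z) *
        sphDist (t.2.1 z) (t.2.2 z)) :
    (∀ a : ℕ → ℂ → OnePoint ℂ, (∀ n, ∃ b c, (a n, b, c) ∈ G) →
      ∃ φ : ℕ → ℕ, StrictMono φ ∧ ∃ h : ℂ → OnePoint ℂ,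
        ∀ K : Set ℂ, K ⊆ ball (0 : ℂ) 1 → IsCompact K → ∀ δ : ℝ, 0 < δ →
          ∀ᶠ n in atTop, ∀ z ∈ K, sphDist (a (φ n) z) (h z) < δ) ∧
    (∀ b : ℕ → ℂ → OnePoint ℂ, (∀ n, ∃ a c, (a, b n, c) ∈ G) →
      ∃ φ : ℕ → ℕ, StrictMono φ ∧ ∃ h : ℂ → OnePoint ℂ,
        ∀ K : Set ℂ, K ⊆ ball (0 : ℂ) 1 → IsCompact K → ∀ δ : ℝ, 0 < δ →
          ∀ᶠ n in atTop, ∀ z ∈ K, sphDist (b (φ n) z) (h z) < δ) ∧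
    (∀ c : ℕ → ℂ → OnePoint ℂ, (∀ n, ∃ a b, (a, b, c n) ∈ G) →
      ∃ φ : ℕ → ℕ, StrictMono φ ∧ ∃ h : ℂ → OnePoint ℂ,
        ∀ K : Set ℂ, K ⊆ ball (0 : ℂ) 1 → IsCompact K → ∀ δ : ℝ, 0 < δ →
          ∀ᶠ n in atTop, ∀ z ∈ K, sphDist (c (φ n) z) (h z) < δ) := by
  refine ⟨normal_coord G hmero ε hε hsep, ?_, ?_⟩
  · -- second coordinate
    set G2 := (fun t : (ℂ → OnePoint ℂ) × (ℂ → OnePoint ℂ) × (ℂ → OnePoint ℂ) =>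
      (t.2.1, t.1, t.2.2)) '' G with hG2
    have hmero2 : ∀ t ∈ G2, MeromorphicOnSph (ball (0 : ℂ) 1) t.1 ∧
        MeromorphicOnSph (ball (0 : ℂ) 1) t.2.1 ∧ MeromorphicOnSph (ball (0 : ℂ) 1) t.2.2 := by
      rintro t' ⟨t, htG, rfl⟩
      obtain ⟨m1, m2, m3⟩ := hmero t htG
      exact ⟨m2, m1, m3⟩
    have hsep2 : ∀ t ∈ G2, ∀ z ∈ ball (0 : ℂ) 1,
        ε ≤ sphDist (t.1 z) (t.2.1 z) * sphDist (t.1 z) (t.2.2 z) *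
          sphDist (t.2.1 z) (t.2.2 z) := by
      rintro t' ⟨t, htG, rfl⟩ z hz
      have h := hsep t htG z hz
      simp only
      rw [sphDist_comm (t.2.1 z) (t.1 z)]
      calc ε ≤ sphDist (t.1 z) (t.2.1 z) * sphDist (t.1 z) (t.2.2 z) *
          sphDist (t.2.1 z) (t.2.2 z) := h
        _ = sphDist (t.1 z) (t.2.1 z) * sphDist (t.2.1 z) (t.2.2 z) *
          sphDist (t.1 z) (t.2.2 z) := by ring
    intro b hb
    apply normal_coord G2 hmero2 ε hε hsep2
    intro n
    obtain ⟨a, c, hac⟩ := hb n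
    exact ⟨a, c, ⟨(a, b n, c), hac, rfl⟩⟩
  · -- third coordinate
    set G3 := (fun t : (ℂ → OnePoint ℂ) × (ℂ → OnePoint ℂ) × (ℂ → OnePoint ℂ) =>
      (t.2.2, t.1, t.2.1)) '' G with hG3
    have hmero3 : ∀ t ∈ G3, MeromorphicOnSph (ball (0 : ℂ) 1) t.1 ∧
        MeromorphicOnSph (ball (0 : ℂ) 1) t.2.1 ∧ MeromorphicOnSph (ball (0 : ℂ) 1) t.2.2 := by
      rintro t' ⟨t, htG, rfl⟩
      obtain ⟨m1, m2, m3⟩ := hmero t htG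
      exact ⟨m3, m1, m2⟩
    have hsep3 : ∀ t ∈ G3, ∀ z ∈ ball (0 : ℂ) 1,
        ε ≤ sphDist (t.1 z) (t.2.1 z) * sphDist (t.1 z) (t.2.2 z) *
          sphDist (t.2.1 z) (t.2.2 z) := by
      rintro t' ⟨t, htG, rfl⟩ z hz
      have h := hsep t htG z hz
      simp only
      rw [sphDist_comm (t.2.2 z) (t.1 z), sphDist_comm (t.2.2 z) (t.2.1 z)]
      calc ε ≤ sphDist (t.1 z) (t.2.1 z) * sphDist (t.1 z) (t.2.2 z) *
          sphDist (t.2.1 z) (t.2.2 z) := h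
        _ = sphDist (t.1 z) (t.2.2 z) * sphDist (t.2.1 z) (t.2.2 z) *
          sphDist (t.1 z) (t.2.1 z) := by ring
    intro c hc
    apply normal_coord G3 hmero3 ε hε hsep3
    intro n
    obtain ⟨a, b, hab⟩ := hc n
    exact ⟨a, b, ⟨(a, b, c n), hab, rfl⟩⟩
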